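/- For all x, y ∈ ℝ with x ≠ 0, setting (a,b) = R(x,y) = (x⁻², yx³ + x²), one has t(a,b) = xy, h-value t(a,b)(a·t(a,b) + 1) = (x + y)y, and f-value (a·t(a,b) + 1)²(t(a,b)² + b) = (x + y)²(y² + xy + 1). In particular P∘R and Q∘R extend to polynomial functions of (x,y). -/
import Mathlib


open MvPolynomial

/-- `t = xy − 1`. -/
noncomputable def tF (x y : ℝ) : ℝ := x * y - 1

/-- `h = t(xt + 1)`. -/
noncomputable def hF (x y : ℝ) : ℝ := tF x y * (x * tF x y + 1)

/-- `f = (xt + 1)²(t² + y)`. -/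
noncomputable def fF (x y : ℝ) : ℝ := (x * tF x y + 1) ^ 2 * (tF x y ^ 2 + y)

/-- `P = f + h`. -/
noncomputable def PF (x y : ℝ) : ℝ := fF x y + hF x y

/-- The auxiliary polynomial `u(f,h)`. -/
noncomputable def uF (f h : ℝ) : ℝ :=
  170 * f * h + 91 * h ^ 2 + 195 * f * h ^ 2 + 69 * h ^ 3 + 75 * f * h ^ 3 + (75 / 4) * h ^ 4

/-- `Q = −t² − 6th(h + 1) − u(f,h)`. -/
noncomputable def QF (x y : ℝ) : ℝ :=
  -tF x y ^ 2 - 6 * tF x y * hF x y * (hF x y + 1) - uF (fF x y) (hF x y)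

lemma t_val (x y : ℝ) (hx : x ≠ 0) : tF (x⁻¹ ^ 2) (y * x ^ 3 + x ^ 2) = x * y := by
  unfold tF; field_simp; ring

lemma h_val (x y : ℝ) (hx : x ≠ 0) : hF (x⁻¹ ^ 2) (y * x ^ 3 + x ^ 2) = (x + y) * y := by
  unfold hF; rw [t_val x y hx]; field_simp; ring

lemma f_val (x y : ℝ) (hx : x ≠ 0) :
    fF (x⁻¹ ^ 2) (y * x ^ 3 + x ^ 2) = (x + y) ^ 2 * (y ^ 2 + x * y + 1) := by
  unfold fF; rw [t_val x y hx]; field_simp; ring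

/-- Along `R(x,y) = (x⁻², yx³ + x²)` (for `x ≠ 0`), the values of `t`, `h`, `f`
are the polynomials `xy`, `(x+y)y`, `(x+y)²(y²+xy+1)`; in particular `P ∘ R`
and `Q ∘ R` extend to polynomial functions of `(x,y)`. -/
theorem pinchuk_double_asymptotic_substitution :
    (∀ x y : ℝ, x ≠ 0 →
      tF (x⁻¹ ^ 2) (y * x ^ 3 + x ^ 2) = x * y ∧
      hF (x⁻¹ ^ 2) (y * x ^ 3 + x ^ 2) = (x + y) * y ∧
      fF (x⁻¹ ^ 2) (y * x ^ 3 + x ^ 2) = (x + y) ^ 2 * (y ^ 2 + x * y + 1)) ∧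
    (∃ G₁ G₂ : MvPolynomial (Fin 2) ℝ, ∀ x y : ℝ, x ≠ 0 →
      PF (x⁻¹ ^ 2) (y * x ^ 3 + x ^ 2) = eval ![x, y] G₁ ∧
      QF (x⁻¹ ^ 2) (y * x ^ 3 + x ^ 2) = eval ![x, y] G₂) := by
  refine ⟨fun x y hx => ⟨t_val x y hx, h_val x y hx, f_val x y hx⟩, ?_⟩
  set T : MvPolynomial (Fin 2) ℝ := X 0 * X 1 with hT
  set H : MvPolynomial (Fin 2) ℝ := (X 0 + X 1) * X 1 with hH
  set F : MvPolynomial (Fin 2) ℝ := (X 0 + X 1) ^ 2 * (X 1 ^ 2 + X 0 * X 1 + 1) with hF'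
  refine ⟨F + H,
    -T ^ 2 - 6 * T * H * (H + 1) -
      (170 * F * H + 91 * H ^ 2 + 195 * F * H ^ 2 + 69 * H ^ 3 + 75 * F * H ^ 3 +
        C (75 / 4 : ℝ) * H ^ 4), fun x y hx => ?_⟩
  constructor
  · unfold PF
    rw [f_val x y hx, h_val x y hx]
    simp [hT, hH, hF']
  · unfold QF uF
    rw [t_val x y hx, f_val x y hx, h_val x y hx]
    simp [hT, hH, hF']
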